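/- The polynomial λ ↦ det(λM + K) is not identically zero; that is, there exists λ ∈ ℝ such that det(λM + K) ≠ 0 (so the matrix pencil λM + K is regular). -/

import Mathlib

open Matrix

lemma eval_charpoly_aux {n : ℕ} (B : Matrix (Fin n) (Fin n) ℝ) (r : ℝ) :
    B.charpoly.eval r = (r • (1 : Matrix (Fin n) (Fin n) ℝ) - B).det := by
  rw [Matrix.charpoly, eval_det, Matrix.matPolyEquiv_charmatrix]
  simp [Matrix.scalar, smul_eq_diagonal_mul]
  rfl

lemma exists_smul_one_sub_det_ne_zero {n : ℕ} (B : Matrix (Fin n) (Fin n) ℝ) :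
    ∃ l : ℝ, (l • (1 : Matrix (Fin n) (Fin n) ℝ) - B).det ≠ 0 := by
  by_contra h
  push_neg at h
  have h0 : B.charpoly = 0 :=
    Polynomial.zero_of_eval_zero _ (fun x => by rw [eval_charpoly_aux]; exact h x)
  exact (Matrix.charpoly_monic B).ne_zero h0

/-- For the undamped piezoelectric pencil `λ M + K` with
`M = [[Mu, 0],[0,0]]`, `K = [[Ku, Kuφ],[Kuφᵀ, Kφ]]`, `Mu` symmetric invertible,
`Ku`, `Kφ` symmetric, `Kφ` invertible, the polynomial `λ ↦ det (λ M + K)` is not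
identically zero: there is `λ : ℝ` with `det (λ M + K) ≠ 0`. -/
theorem pencil_regular (nu nφ : ℕ)
    (Mu Ku : Matrix (Fin nu) (Fin nu) ℝ)
    (Kuφ : Matrix (Fin nu) (Fin nφ) ℝ)
    (Kφ : Matrix (Fin nφ) (Fin nφ) ℝ)
    (hMuSymm : Muᵀ = Mu) (hMuUnit : IsUnit Mu)
    (hKuSymm : Kuᵀ = Ku)
    (hKφSymm : Kφᵀ = Kφ) (hKφUnit : IsUnit Kφ)
    (M : Matrix (Fin nu ⊕ Fin nφ) (Fin nu ⊕ Fin nφ) ℝ)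
    (K : Matrix (Fin nu ⊕ Fin nφ) (Fin nu ⊕ Fin nφ) ℝ)
    (hM : M = fromBlocks Mu 0 0 0)
    (hK : K = fromBlocks Ku Kuφ Kuφᵀ Kφ) :
    ∃ l : ℝ, (l • M + K).det ≠ 0 := by
  subst hM hK
  obtain ⟨iKφ⟩ := hKφUnit.nonempty_invertible
  obtain ⟨iMu⟩ := hMuUnit.nonempty_invertible
  set A : Matrix (Fin nu) (Fin nu) ℝ := Ku - Kuφ * ⅟Kφ * Kuφᵀ with hA
  obtain ⟨l, hl⟩ := exists_smul_one_sub_det_ne_zero (-(⅟Mu * A))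
  refine ⟨l, ?_⟩
  have hblock : l • fromBlocks Mu 0 0 0 + fromBlocks Ku Kuφ Kuφᵀ Kφ
      = fromBlocks (l • Mu + Ku) Kuφ Kuφᵀ Kφ := by
    ext (i | i) (j | j) <;>
      simp [Matrix.fromBlocks, Matrix.add_apply, Matrix.smul_apply]
  rw [hblock, Matrix.det_fromBlocks₂₂]
  have hfactor : l • Mu + Ku - Kuφ * ⅟Kφ * Kuφᵀ = Mu * (l • 1 - -(⅟Mu * A)) := by
    rw [sub_neg_eq_add, Matrix.mul_add, Matrix.mul_smul, Matrix.mul_one,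
      ← Matrix.mul_assoc, mul_invOf_self, Matrix.one_mul, hA]
    noncomm_ring
  rw [add_sub_assoc] at hfactor
  rw [add_sub_assoc, hfactor, Matrix.det_mul]
  have hdKφ : Kφ.det ≠ 0 := by
    have := Matrix.isUnit_iff_isUnit_det Kφ |>.mp hKφUnit
    exact this.ne_zero
  have hdMu : Mu.det ≠ 0 := by
    have := Matrix.isUnit_iff_isUnit_det Mu |>.mp hMuUnit
    exact this.ne_zero
  exact mul_ne_zero hdKφ (mul_ne_zero hdMu hl)
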